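/- Let A be a ring, (B_i)_{i ∈ I} a family of local A-algebras, and Y a quasicompact and quasiseparated A-scheme. Then the natural map Y(∏_{i∈I} B_i) → ∏_{i∈I} Y(B_i) is a bijection. -/

import Mathlib

open AlgebraicGeometry CategoryTheory

/-- The set `Y(B)` of `A`-morphisms `Spec B → Y`, for `Y` a scheme over `Spec A`. -/
def SchemePoints (A : Type u) [CommRing A] (Y : Scheme.{u})
    (sY : Y ⟶ Spec (CommRingCat.of A)) (B : Type u) [CommRing B] [Algebra A B] : Type u :=
  { f : Spec (CommRingCat.of B) ⟶ Y //
      f ≫ sY = Spec.map (CommRingCat.ofHom (algebraMap A B)) }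

/-- The natural map `Y(∏ᵢ Bᵢ) → Y(Bᵢ)` induced by the projection `∏ᵢ Bᵢ → Bᵢ`. -/
noncomputable def SchemePoints.component (A : Type u) [CommRing A] (Y : Scheme.{u})
    (sY : Y ⟶ Spec (CommRingCat.of A)) {I : Type u}
    (B : I → Type u) [∀ i, CommRing (B i)] [∀ i, Algebra A (B i)]
    (f : SchemePoints A Y sY (Π i, B i)) (i : I) : SchemePoints A Y sY (B i) :=
  ⟨Spec.map (CommRingCat.ofHom (Pi.evalRingHom B i)) ≫ f.1, by
    rw [Category.assoc, f.2, ← Spec.map_comp]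
    rfl⟩

section ProdLocalAux

open CategoryTheory.Limits

noncomputable section

namespace ProdLocalAux

variable {I : Type u} (B : I → Type u) [∀ i, CommRing (B i)]

lemma pi_isUnit {ι : Type*} {R : ι → Type*} [∀ i, CommMonoid (R i)] {x : Π i, R i}
    (h : ∀ i, IsUnit (x i)) : IsUnit x := by
  choose y hy using fun i => IsUnit.exists_right_inv (h i)
  exact IsUnit.of_mul_eq_one y (funext hy)

lemma span_exists_isUnit {R : Type*} [CommRing R] [IsLocalRing R] {s : Set R}
    (h : Ideal.span s = ⊤) : ∃ x ∈ s, IsUnit x := by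
  by_contra hc
  push_neg at hc
  have : Ideal.span s ≤ IsLocalRing.maximalIdeal R := by
    rw [Ideal.span_le]
    intro x hx
    exact hc x hx
  rw [h] at this
  exact (IsLocalRing.maximalIdeal.isMaximal R).ne_top (top_le_iff.mp this)

/-- The product ring as an object of `CommRingCat`. -/
abbrev PR : CommRingCat.{u} := CommRingCat.of (Π i, B i)

/-- Evaluation at `i`. -/
abbrev ev (i : I) : PR B ⟶ CommRingCat.of (B i) := CommRingCat.ofHom (Pi.evalRingHom B i)

/-- The subfamily over the fiber of `c` at `k`. -/
abbrev sub {K : Type u} (c : I → K) (k : K) : {i // c i = k} → Type u := fun j => B j.1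

/-- Restriction to the fiber of `c` at `k`. -/
abbrev res {K : Type u} (c : I → K) (k : K) : PR B ⟶ PR (sub B c k) :=
  CommRingCat.ofHom (Pi.ringHom fun j => Pi.evalRingHom B j.1)

lemma res_ev {K : Type u} (c : I → K) (k : K) (j : {i // c i = k}) :
    res B c k ≫ ev (sub B c k) j = ev B j.1 := rfl

lemma Spec_ev_factor {K : Type u} (c : I → K) (k : K) (j : {i // c i = k}) :
    Spec.map (ev B j.1) = Spec.map (ev (sub B c k) j) ≫ Spec.map (res B c k) := by
  rw [← Spec.map_comp, res_ev]

/-- The canonical ring isomorphism between `Π i, B i` and the product over the fibers of `c`. -/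
def pieq {K : Type u} (c : I → K) : (Π i, B i) ≃+* Π k, (Π j : {i // c i = k}, B j.1) where
  toFun x k j := x j.1
  invFun y i := y (c i) ⟨i, rfl⟩
  left_inv x := rfl
  right_inv y := by funext k j; obtain ⟨i, hi⟩ := j; subst hi; rfl
  map_mul' _ _ := rfl
  map_add' _ _ := rfl

section FinitePartition

variable {K : Type u} [Finite K] (c : I → K)

/-- The family of piece rings. -/
abbrev S (k : K) : CommRingCat.{u} := PR (sub B c k)

/-- The canonical isomorphism `Spec (Π k, S k) ≅ Spec (Π i, B i)`. -/
noncomputable def E : Spec (CommRingCat.of (Π k, S B c k)) ⟶ Spec (PR B) :=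
  Spec.map (CommRingCat.ofHom (pieq B c).toRingHom)

instance : IsIso (CommRingCat.ofHom (pieq B c).toRingHom) :=
  (RingEquiv.toCommRingCatIso (pieq B c)).isIso_hom

instance : IsIso (E B c) := by unfold E; infer_instance

omit [Finite K] in
lemma ι_sigma_E (k : K) :
    (Sigma.ι (fun k => Spec (S B c k)) k ≫ sigmaSpec (S B c)) ≫ E B c
      = Spec.map (res B c k) := by
  rw [ι_sigmaSpec, E, ← Spec.map_comp]
  rfl

theorem hom_ext {Y : Scheme.{u}} (f g : Spec (PR B) ⟶ Y)
    (h : ∀ k, Spec.map (res B c k) ≫ f = Spec.map (res B c k) ≫ g) : f = g := by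
  rw [← cancel_epi (E B c), ← cancel_epi (sigmaSpec (S B c))]
  apply Sigma.hom_ext
  intro k
  simp only [← Category.assoc]
  rw [ι_sigma_E, h]

/-- Glue morphisms defined on the pieces of the partition. -/
noncomputable def glue {Y : Scheme.{u}} (g : ∀ k, Spec (S B c k) ⟶ Y) :
    Spec (PR B) ⟶ Y :=
  inv (E B c) ≫ inv (sigmaSpec (S B c)) ≫ Sigma.desc g

lemma res_glue {Y : Scheme.{u}} (g : ∀ k, Spec (S B c k) ⟶ Y) (k : K) :
    Spec.map (res B c k) ≫ glue B c g = g k := by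
  rw [← ι_sigma_E, glue]
  simp only [Category.assoc]
  simp

end FinitePartition

instance instLocalOf (R : Type u) [CommRing R] [IsLocalRing R] :
    IsLocalRing ↥(CommRingCat.of R) := ‹IsLocalRing R›

/-- The image of any morphism from the spectrum of a local ring is contained in any open set
containing the image of the closed point. -/
lemma range_subset_of_closedPoint_mem {R : Type u} [CommRing R] [IsLocalRing R] {Y : Scheme.{u}}
    (f : Spec (CommRingCat.of R) ⟶ Y) {U : Set Y} (hU : IsOpen U)
    (h : f.base (IsLocalRing.closedPoint R : PrimeSpectrum R) ∈ U) :
    Set.range f.base ⊆ U := by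
  rintro _ ⟨x, rfl⟩
  exact Specializes.mem_open
    ((IsLocalRing.specializes_closedPoint
      (x : PrimeSpectrum R)).map f.base.hom.2) hU h

variable [∀ i, IsLocalRing (B i)]

/-- The canonical point of `Spec (Π i, B i)` lying over `i`. -/
noncomputable def pt (i : I) : Spec (PR B) :=
  (Spec.map (ev B i)).base (IsLocalRing.closedPoint (B i))

lemma res_pt {K : Type u} (c : I → K) (k : K) (j : {i // c i = k}) :
    (Spec.map (res B c k)).base (pt (sub B c k) j) = pt B j.1 := by
  rw [pt, pt, Spec_ev_factor B c k j]; rfl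

lemma mem_basicOpen_of_unit {K : Type u} (c : I → K) (k : K) (r : Π i, B i)
    (hr : ∀ j : {i // c i = k}, IsUnit (r j.1)) (x : Spec (PR (sub B c k))) :
    ((Spec.map (res B c k)).base x : PrimeSpectrum (Π i, B i)) ∈
      PrimeSpectrum.basicOpen r := by
  rw [Spec.map_apply]; erw [PrimeSpectrum.mem_basicOpen]
  intro hmem
  have : ((res B c k) r : Π j : {i // c i = k}, B j.1) ∈ x.asIdeal := hmem
  obtain ⟨y, hy⟩ := IsUnit.exists_right_inv (pi_isUnit (fun j => hr j))
  have h2 := x.asIdeal.mul_mem_right y this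
  have h3 : ((res B c k) r) * y = 1 := hy
  rw [h3] at h2
  exact (x.asIdeal.ne_top_iff_one.mp x.2.ne_top) h2

/-- Core partition lemma. -/
lemma core_partition {Y : Scheme.{u}} (f : Spec (PR B) ⟶ Y) {K : Type u} (r : K → (Π i, B i))
    (V : K → Set Y)
    (hV : ∀ k (x : Spec (PR B)),
      (x : PrimeSpectrum (Π i, B i)) ∈ PrimeSpectrum.basicOpen (r k) → f.base x ∈ V k)
    (hunit : ∀ i, ∃ k, IsUnit (r k i)) :
    ∃ c : I → K, ∀ k, Set.range (Spec.map (res B c k) ≫ f).base ⊆ V k := by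
  choose c hc using hunit
  refine ⟨c, fun k => ?_⟩
  rintro _ ⟨x, rfl⟩
  rw [Scheme.Hom.comp_apply]
  exact hV k _ (mem_basicOpen_of_unit B c k (r k)
    (fun j => by have := hc j.1; rwa [j.2] at this) x)


theorem exists_partition {Y : Scheme.{u}} (f : Spec (PR B) ⟶ Y)
    {n : Type u} (U : n → Set Y) (hUo : ∀ k, IsOpen (U k))
    (hU : ∀ y : Y, ∃ k, y ∈ U k) :
    ∃ (K : Type u) (_ : Finite K) (c : I → K) (t : K → n),
      ∀ k, Set.range (Spec.map (res B c k) ≫ f).base ⊆ U (t k) := by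
  classical
  set R := Π i, B i with hR
  let T : Set R := {r | ∃ k,
    (PrimeSpectrum.basicOpen r : Set (PrimeSpectrum R)) ⊆ f.base ⁻¹' (U k)}
  have hcov : (Set.univ : Set (PrimeSpectrum R)) ⊆
      ⋃ r : T, (PrimeSpectrum.basicOpen r.1 : Set (PrimeSpectrum R)) := by
    intro x _
    obtain ⟨k, hk⟩ := hU (f.base x)
    have hopen : IsOpen (f.base ⁻¹' (U k) : Set (PrimeSpectrum R)) :=
      (hUo k).preimage f.base.hom.2
    obtain ⟨v, ⟨r, rfl⟩, hxv, hsub⟩ :=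
      PrimeSpectrum.isTopologicalBasis_basic_opens.isOpen_iff.mp hopen x hk
    exact Set.mem_iUnion.mpr ⟨⟨r, k, hsub⟩, hxv⟩
  obtain ⟨T₀, hT₀⟩ := IsCompact.elim_finite_subcover isCompact_univ
    (fun r : T => (PrimeSpectrum.basicOpen r.1 : Set (PrimeSpectrum R)))
    (fun r => (PrimeSpectrum.basicOpen r.1).2) hcov
  let s : Finset R := T₀.image Subtype.val
  have hsT : ∀ a ∈ s, a ∈ T := by
    intro a ha
    obtain ⟨r, _, rfl⟩ := Finset.mem_image.mp ha
    exact r.2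
  have hspan : Ideal.span (↑s : Set R) = ⊤ := by
    rw [← PrimeSpectrum.iSup_basicOpen_eq_top_iff']
    rw [eq_top_iff]
    intro x _
    obtain ⟨_, ⟨r, rfl⟩, _, ⟨hr, rfl⟩, hx⟩ := hT₀ (Set.mem_univ x)
    exact TopologicalSpace.Opens.mem_iSup.mpr
      ⟨r.1, TopologicalSpace.Opens.mem_iSup.mpr
        ⟨Finset.mem_image.mpr ⟨r, hr, rfl⟩, hx⟩⟩
  have hi : ∀ i, ∃ r ∈ (↑s : Set R), IsUnit (r i) := by
    intro i
    have h1 : (1 : R) ∈ Ideal.span (↑s : Set R) := by rw [hspan]; trivial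
    have h2 := Ideal.mem_map_of_mem (Pi.evalRingHom B i) h1
    rw [Ideal.map_span] at h2
    have h3 : Ideal.span ((Pi.evalRingHom B i) '' ↑s) = ⊤ := by
      rw [Ideal.eq_top_iff_one]; rwa [map_one] at h2
    obtain ⟨b, ⟨r, hrs, rfl⟩, hb⟩ := span_exists_isUnit h3
    exact ⟨r, hrs, hb⟩
  let t : ↥s → n := fun e => (hsT e.1 e.2).choose
  have ht : ∀ e : ↥s, (PrimeSpectrum.basicOpen e.1 : Set (PrimeSpectrum R)) ⊆
      f.base ⁻¹' (U (t e)) := fun e => (hsT e.1 e.2).choose_spec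
  obtain ⟨c, hc⟩ := core_partition B f (fun e : ↥s => e.1) (fun e => U (t e))
    (fun e x hx => ht e hx) (fun i => by
      obtain ⟨r, hrs, hb⟩ := hi i
      exact ⟨⟨r, hrs⟩, hb⟩)
  exact ⟨↥s, inferInstance, c, t, hc⟩

theorem exists_partition_pt {Y : Scheme.{u}} (f : Spec (PR B) ⟶ Y)
    {V : Scheme.{u}} [IsAffine V] (m : V ⟶ Y) [IsOpenImmersion m]
    (hf : Set.range f.base ⊆ Set.range m.base)
    {W : Set Y} (hWc : IsCompact W) (hWo : IsOpen W) (hWm : W ⊆ Set.range m.base)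
    (hpt : ∀ i, f.base (pt B i) ∈ W) :
    ∃ (K : Type u) (_ : Finite K) (c : I → K),
      ∀ k, Set.range (Spec.map (res B c k) ≫ f).base ⊆ W := by
  classical
  let l := IsOpenImmersion.lift m f hf
  have hl : l ≫ m = f := IsOpenImmersion.lift_fac m f hf
  let ψ : Spec (PR B) ⟶ Spec Γ(V, ⊤) := l ≫ V.isoSpec.hom
  let φ : Γ(V, ⊤) ⟶ PR B := Spec.preimage ψ
  have hφ : Spec.map φ = ψ := Spec.map_preimage ψ
  let θ : Spec Γ(V, ⊤) ⟶ Y := V.isoSpec.inv ≫ m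
  have hfθ : f = ψ ≫ θ := by
    show f = (l ≫ V.isoSpec.hom) ≫ (V.isoSpec.inv ≫ m)
    rw [Category.assoc, Iso.hom_inv_id_assoc, hl]
  have hrθ : W ⊆ Set.range θ.base := by
    intro w hw
    obtain ⟨v, hv⟩ := hWm hw
    have hvv : (V.isoSpec.inv.base) (V.isoSpec.hom.base v) = v := by
      rw [← Scheme.Hom.comp_apply, Iso.hom_inv_id]
      rfl
    refine ⟨V.isoSpec.hom.base v, ?_⟩
    show (V.isoSpec.inv ≫ m).base _ = w
    rw [Scheme.Hom.comp_apply, hvv, hv]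
  have hθoi : IsOpenImmersion θ := by
    show IsOpenImmersion (V.isoSpec.inv ≫ m)
    infer_instance
  let W' : Set (PrimeSpectrum Γ(V, ⊤)) := θ.base ⁻¹' W
  have hW'o : IsOpen W' := hWo.preimage θ.base.hom.2
  have hW'c : IsCompact W' :=
    (Scheme.Hom.isOpenEmbedding θ).isInducing.isCompact_preimage' hWc hrθ
  obtain ⟨a, ha⟩ := PrimeSpectrum.isCompact_isOpen_iff.mp ⟨hW'c, hW'o⟩
  have hψf : ∀ x : Spec (PR B), f.base x = θ.base (ψ.base x) := by
    intro x; rw [hfθ, Scheme.Hom.comp_apply]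
  have hmem : ∀ x : Spec (PR B), (ψ.base x : PrimeSpectrum Γ(V, ⊤)) ∈ W' ↔ f.base x ∈ W := by
    intro x
    rw [hψf x]
    rfl
  have hcomap : ∀ x : Spec (PR B), (ψ.base x : PrimeSpectrum Γ(V, ⊤))
      = PrimeSpectrum.comap φ.hom x := by
    intro x; rw [← hφ]; rfl
  have hunit : ∀ i, ∃ α : {y // y ∈ a}, IsUnit ((φ α.1 : Π i, B i) i) := by
    intro i
    have h1 : (ψ.base (pt B i) : PrimeSpectrum Γ(V, ⊤)) ∈ W' := (hmem _).mpr (hpt i)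
    rw [← ha] at h1
    have h2 : ¬ ((↑a : Set Γ(V, ⊤)) ⊆ ((ψ.base (pt B i) : PrimeSpectrum Γ(V, ⊤)).asIdeal :
        Set Γ(V, ⊤))) := fun hsub => h1 ((PrimeSpectrum.mem_zeroLocus _ _).mpr hsub)
    obtain ⟨α, hαa, hα⟩ := Set.not_subset.mp h2
    refine ⟨⟨α, hαa⟩, ?_⟩
    by_contra hnu
    apply hα
    rw [hcomap] at *
    show α ∈ Ideal.comap φ.hom (pt B i).asIdeal
    rw [Ideal.mem_comap]
    show (φ α : Π i, B i) ∈ Ideal.comap (Pi.evalRingHom B i)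
      (IsLocalRing.closedPoint (B i)).asIdeal
    rw [Ideal.mem_comap]
    exact IsLocalRing.mem_maximalIdeal _ |>.mpr (mem_nonunits_iff.mpr hnu)
  obtain ⟨c, hc⟩ := core_partition B f (fun α : {y // y ∈ a} => (φ α.1 : Π i, B i))
    (fun _ => W) (fun α x hx => by
      rw [← hmem x, ← ha]
      intro hzl
      have h5 := (PrimeSpectrum.mem_zeroLocus _ _).mp hzl α.2
      rw [hcomap x] at h5
      exact (PrimeSpectrum.mem_basicOpen _ _).mp hx (Ideal.mem_comap.mp h5))
    hunit
  exact ⟨_, inferInstance, c, hc⟩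
theorem affine_eq {Y : Scheme.{u}} (f g : Spec (PR B) ⟶ Y)
    {V : Scheme.{u}} [IsAffine V] (m : V ⟶ Y) [IsOpenImmersion m]
    (hf : Set.range f.base ⊆ Set.range m.base) (hg : Set.range g.base ⊆ Set.range m.base)
    (h : ∀ i, Spec.map (ev B i) ≫ f = Spec.map (ev B i) ≫ g) : f = g := by
  let lf := IsOpenImmersion.lift m f hf
  have hlf : lf ≫ m = f := IsOpenImmersion.lift_fac m f hf
  let lg := IsOpenImmersion.lift m g hg
  have hlg : lg ≫ m = g := IsOpenImmersion.lift_fac m g hg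
  suffices hfg : lf = lg by rw [← hlf, ← hlg, hfg]
  have hc : ∀ i, Spec.map (ev B i) ≫ lf = Spec.map (ev B i) ≫ lg := by
    intro i
    rw [← cancel_mono m, Category.assoc, Category.assoc, hlf, hlg]
    exact h i
  rw [← cancel_mono V.isoSpec.hom]
  let φf : Γ(V, ⊤) ⟶ PR B := Spec.preimage (lf ≫ V.isoSpec.hom)
  let φg : Γ(V, ⊤) ⟶ PR B := Spec.preimage (lg ≫ V.isoSpec.hom)
  have hφf : Spec.map φf = lf ≫ V.isoSpec.hom := Spec.map_preimage _
  have hφg : Spec.map φg = lg ≫ V.isoSpec.hom := Spec.map_preimage _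
  rw [← hφf, ← hφg]
  congr 1
  have key : ∀ i, φf ≫ ev B i = φg ≫ ev B i := by
    intro i
    apply Spec.map_injective
    rw [Spec.map_comp, Spec.map_comp, hφf, hφg, ← Category.assoc, ← Category.assoc, hc i]
  apply CommRingCat.hom_ext
  apply RingHom.ext
  intro x
  funext i
  exact congrArg (fun (ψ : Γ(V, ⊤) ⟶ CommRingCat.of (B i)) => ψ x) (key i)
lemma range_comp_subset {X Z W : Scheme.{u}} (a : X ⟶ Z) (b : Z ⟶ W) :
    Set.range (a ≫ b).base ⊆ Set.range b.base := by
  intro y hy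
  obtain ⟨x, rfl⟩ := hy
  rw [Scheme.Hom.comp_apply]
  exact ⟨_, rfl⟩

theorem inj {Y : Scheme.{u}} [CompactSpace Y] [QuasiSeparatedSpace Y]
    (f g : Spec (PR B) ⟶ Y)
    (h : ∀ i, Spec.map (ev B i) ≫ f = Spec.map (ev B i) ≫ g) : f = g := by
  classical
  let 𝒰 := Y.affineCover.finiteSubcover
  haveI : Fintype 𝒰.I₀ := inferInstance
  have hAff : ∀ k, IsAffine (𝒰.X k) := fun k => by
    show IsAffine (Y.affineCover.X _); infer_instance
  let U : 𝒰.I₀ → Set Y := fun k => Set.range (𝒰.f k).base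
  have hUo : ∀ k, IsOpen (U k) := fun k => (𝒰.f k).isOpenEmbedding.isOpen_range
  have hUc : ∀ k, IsCompact (U k) := fun k => by
    haveI := hAff k
    exact isCompact_range (𝒰.f k).base.hom.2
  have hUcov : ∀ y : Y, ∃ k, y ∈ U k := fun y => ⟨𝒰.idx y, 𝒰.covers y⟩
  obtain ⟨K₁, hK₁, c₁, t₁, h₁⟩ := exists_partition B f U hUo hUcov
  obtain ⟨K₂, hK₂, c₂, t₂, h₂⟩ := exists_partition B g U hUo hUcov
  haveI := hK₁; haveI := hK₂
  let c : I → K₁ × K₂ := fun i => (c₁ i, c₂ i)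
  apply hom_ext B c
  rintro ⟨k₁, k₂⟩
  -- factor res B c (k₁,k₂) through res B c₁ k₁ and res B c₂ k₂
  let ρ₁ : PR (sub B c₁ k₁) ⟶ PR (sub B c (k₁, k₂)) :=
    CommRingCat.ofHom (Pi.ringHom fun j =>
      Pi.evalRingHom (sub B c₁ k₁) ⟨j.1, congrArg Prod.fst j.2⟩)
  have hρ₁ : res B c (k₁, k₂) = res B c₁ k₁ ≫ ρ₁ := rfl
  let ρ₂ : PR (sub B c₂ k₂) ⟶ PR (sub B c (k₁, k₂)) :=
    CommRingCat.ofHom (Pi.ringHom fun j =>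
      Pi.evalRingHom (sub B c₂ k₂) ⟨j.1, congrArg Prod.snd j.2⟩)
  have hρ₂ : res B c (k₁, k₂) = res B c₂ k₂ ≫ ρ₂ := rfl
  have hrf : Set.range (Spec.map (res B c (k₁, k₂)) ≫ f).base ⊆ U (t₁ k₁) := by
    rw [hρ₁, Spec.map_comp, Category.assoc]
    exact (range_comp_subset _ _).trans (h₁ k₁)
  have hrg : Set.range (Spec.map (res B c (k₁, k₂)) ≫ g).base ⊆ U (t₂ k₂) := by
    rw [hρ₂, Spec.map_comp, Category.assoc]
    exact (range_comp_subset _ _).trans (h₂ k₂)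
  -- components agree
  have hcomp : ∀ j : {i // c i = (k₁, k₂)},
      Spec.map (ev (sub B c (k₁, k₂)) j) ≫ Spec.map (res B c (k₁, k₂)) ≫ f
        = Spec.map (ev (sub B c (k₁, k₂)) j) ≫ Spec.map (res B c (k₁, k₂)) ≫ g := by
    intro j
    rw [← Category.assoc, ← Spec_ev_factor, h j.1, Spec_ev_factor B c (k₁, k₂) j,
      Category.assoc]
  -- pts of f land in W
  have hfg_pt : ∀ i, f.base (pt B i) = g.base (pt B i) := by
    intro i
    have := congrArg (fun q : Spec (CommRingCat.of (B i)) ⟶ Y =>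
      q.base (IsLocalRing.closedPoint (B i))) (h i)
    exact this
  have hptW : ∀ j : {i // c i = (k₁, k₂)},
      (Spec.map (res B c (k₁, k₂)) ≫ f).base (pt (sub B c (k₁, k₂)) j)
        ∈ U (t₁ k₁) ∩ U (t₂ k₂) := by
    intro j
    rw [Scheme.Hom.comp_apply, res_pt]
    constructor
    · have : pt B j.1 = (Spec.map (res B c₁ k₁)).base
          (pt (sub B c₁ k₁) ⟨j.1, congrArg Prod.fst j.2⟩) :=
        (res_pt B c₁ k₁ ⟨j.1, congrArg Prod.fst j.2⟩).symm
      rw [this, ← Scheme.Hom.comp_apply]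
      exact h₁ k₁ ⟨_, rfl⟩
    · rw [hfg_pt]
      have : pt B j.1 = (Spec.map (res B c₂ k₂)).base
          (pt (sub B c₂ k₂) ⟨j.1, congrArg Prod.snd j.2⟩) :=
        (res_pt B c₂ k₂ ⟨j.1, congrArg Prod.snd j.2⟩).symm
      rw [this, ← Scheme.Hom.comp_apply]
      exact h₂ k₂ ⟨_, rfl⟩
  have hWc : IsCompact (U (t₁ k₁) ∩ U (t₂ k₂)) :=
    QuasiSeparatedSpace.inter_isCompact _ _ (hUo _) (hUc _) (hUo _) (hUc _)
  haveI := hAff (t₁ k₁)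
  haveI := hAff (t₂ k₂)
  obtain ⟨K', hK', c', h'⟩ := exists_partition_pt (sub B c (k₁, k₂))
    (Spec.map (res B c (k₁, k₂)) ≫ f) (𝒰.f (t₁ k₁)) hrf hWc
    ((hUo _).inter (hUo _)) Set.inter_subset_left hptW
  haveI := hK'
  apply hom_ext (sub B c (k₁, k₂)) c'
  intro k'
  apply affine_eq _ _ _ (𝒰.f (t₂ k₂))
  · exact (h' k').trans Set.inter_subset_right
  · rw [← Category.assoc]
    intro y hy
    exact hrg (range_comp_subset _ _ hy)
  · intro j''
    have key := hcomp j''.1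
    simp only [← Category.assoc] at key ⊢
    rw [← Spec_ev_factor]
    exact key
theorem surj {Y : Scheme.{u}} [CompactSpace Y]
    (F : ∀ i, Spec (CommRingCat.of (B i)) ⟶ Y) :
    ∃ f : Spec (PR B) ⟶ Y, ∀ i, Spec.map (ev B i) ≫ f = F i := by
  classical
  let 𝒰 := Y.affineCover.finiteSubcover
  haveI : Fintype 𝒰.I₀ := inferInstance
  have hAff : ∀ k, IsAffine (𝒰.X k) := fun k => by
    show IsAffine (Y.affineCover.X _); infer_instance
  let c : I → 𝒰.I₀ := fun i => 𝒰.idx ((F i).base (IsLocalRing.closedPoint (B i)))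
  have hrange : ∀ i, Set.range (F i).base ⊆ Set.range (𝒰.f (c i)).base := fun i =>
    range_subset_of_closedPoint_mem (F i)
      ((𝒰.f (c i)).isOpenEmbedding.isOpen_range) (𝒰.covers _)
  have hrange' : ∀ (k) (j : {i // c i = k}),
      Set.range (F j.1).base ⊆ Set.range (𝒰.f k).base := by
    rintro k ⟨i, rfl⟩
    exact hrange i
  let l : ∀ (k) (j : {i // c i = k}), Spec (CommRingCat.of (B j.1)) ⟶ 𝒰.X k :=
    fun k j => IsOpenImmersion.lift (𝒰.f k) (F j.1) (hrange' k j)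
  have hl : ∀ k (j : {i // c i = k}), l k j ≫ 𝒰.f k = F j.1 := fun k j =>
    IsOpenImmersion.lift_fac _ _ (hrange' k j)
  let φ : ∀ k, Γ(𝒰.X k, ⊤) ⟶ PR (sub B c k) := fun k =>
    letI := hAff k
    CommRingCat.ofHom (R := Γ(𝒰.X k, ⊤)) (Pi.ringHom (γ := Γ(𝒰.X k, ⊤)) fun j =>
      ((show Γ(𝒰.X k, ⊤) ⟶ CommRingCat.of (B j.1) from
        Spec.preimage (l k j ≫ (𝒰.X k).isoSpec.hom)).hom : Γ(𝒰.X k, ⊤) →+* B j.1))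
  let g : ∀ k, Spec (PR (sub B c k)) ⟶ Y := fun k =>
    letI := hAff k
    Spec.map (φ k) ≫ (𝒰.X k).isoSpec.inv ≫ 𝒰.f k
  refine ⟨glue B c g, fun i => ?_⟩
  rw [Spec_ev_factor B c (c i) ⟨i, rfl⟩, Category.assoc, res_glue]
  letI := hAff (c i)
  have h1 : Spec.map (ev (sub B c (c i)) ⟨i, rfl⟩) ≫ Spec.map (φ (c i))
      = l (c i) ⟨i, rfl⟩ ≫ (𝒰.X (c i)).isoSpec.hom := by
    rw [← Spec.map_comp]
    have h2 : φ (c i) ≫ ev (sub B c (c i)) ⟨i, rfl⟩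
        = Spec.preimage (l (c i) ⟨i, rfl⟩ ≫ (𝒰.X (c i)).isoSpec.hom) := rfl
    rw [h2, Spec.map_preimage]
  have h3 : g (c i) = Spec.map (φ (c i)) ≫ (𝒰.X (c i)).isoSpec.inv ≫ 𝒰.f (c i) := rfl
  rw [h3, ← Category.assoc, h1, Category.assoc, Iso.hom_inv_id_assoc, hl]
end ProdLocalAux

end

end ProdLocalAux

/-- For a quasicompact quasiseparated scheme `Y` over `Spec A` and a family `(Bᵢ)` of
*local* `A`-algebras, the natural map `Y(∏ᵢ Bᵢ) → ∏ᵢ Y(Bᵢ)` is bijective. -/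
theorem points_of_product_bijective_of_local
    (A : Type u) [CommRing A] (Y : Scheme.{u}) (sY : Y ⟶ Spec (CommRingCat.of A))
    [CompactSpace Y] [QuasiSeparatedSpace Y]
    (I : Type u) (B : I → Type u) [∀ i, CommRing (B i)] [∀ i, Algebra A (B i)]
    [∀ i, IsLocalRing (B i)] :
    Function.Bijective
      (fun f : SchemePoints A Y sY (Π i, B i) =>
        fun i : I => SchemePoints.component A Y sY B f i) := by
  constructor
  · intro f g hfg
    apply Subtype.ext
    apply ProdLocalAux.inj B f.1 g.1
    intro i
    exact congrArg Subtype.val (congrFun hfg i)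
  · intro F
    obtain ⟨f, hf⟩ := ProdLocalAux.surj B (fun i => (F i).1)
    have h0 : Spec.map (Spec.preimage (f ≫ sY)) = f ≫ sY := Spec.map_preimage _
    set φ := Spec.preimage (f ≫ sY) with hφ
    have hcomp : ∀ i, φ ≫ ProdLocalAux.ev B i
        = CommRingCat.ofHom (algebraMap A (B i)) := by
      intro i
      apply Spec.map_injective
      rw [Spec.map_comp, h0, ← Category.assoc, hf i]
      exact (F i).2
    have hφ2 : φ = CommRingCat.ofHom (algebraMap A (Π i, B i)) := by
      apply CommRingCat.hom_ext
      apply RingHom.ext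
      intro a
      funext i
      exact congrArg
        (fun (ψ : CommRingCat.of A ⟶ CommRingCat.of (B i)) => ψ a) (hcomp i)
    have hA : f ≫ sY = Spec.map (CommRingCat.ofHom (algebraMap A (Π i, B i))) := by
      rw [← h0, hφ2]
    refine ⟨⟨f, hA⟩, ?_⟩
    funext i
    exact Subtype.ext (hf i)
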